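/- If OSD_X and OSD_Y are nonnegative reals and there exist functions Sep_X, Sep_Y, Span_X, Span_Y with Span ≤ Sep ≤ Span(·/2) (in the ν-argument) for each space, the limits lim_{ν→0} log Sep_X(ν)/(−log ν) = OSD_X and lim_{ν→0} log Sep_Y(ν)/(−log ν) = OSD_Y exist, and the product space satisfies Sep_{X×Y}(ν) ≥ Sep_X(ν)·Sep_Y(ν) and Span_{X×Y}(ν) ≤ Span_X(ν/2)·Span_Y(ν/2), then lim_{ν→0} log Sep_{X×Y}(ν)/(−log ν) exists and equals OSD_X + OSD_Y. -/

import Mathlib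

open Filter

/-- Abstract product formula for the orbit separation dimension: if the
separation/spanning numbers of `X` and `Y` satisfy `Span ≤ Sep ≤ Span(·/2)`,
the limits defining `OSD_X` and `OSD_Y` exist, and the product system satisfies
`Sep_{X×Y}(ν) ≥ Sep_X(ν)·Sep_Y(ν)` and `Span_{X×Y}(ν) ≤ Span_X(ν/2)·Span_Y(ν/2)`,
then the limit for the product exists and equals `OSD_X + OSD_Y`. -/
theorem stmt17 (SepX SpanX SepY SpanY SepXY SpanXY : ℝ → ℝ)
    (OSDX OSDY : ℝ) (hX0 : 0 ≤ OSDX) (hY0 : 0 ≤ OSDY)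
    (hpos : ∀ ν : ℝ, 0 < ν →
      1 ≤ SpanX ν ∧ 1 ≤ SepX ν ∧ 1 ≤ SpanY ν ∧ 1 ≤ SepY ν ∧
        1 ≤ SpanXY ν ∧ 1 ≤ SepXY ν)
    (hmono : ∀ ν₁ ν₂ : ℝ, 0 < ν₁ → ν₁ ≤ ν₂ →
      SepX ν₂ ≤ SepX ν₁ ∧ SepY ν₂ ≤ SepY ν₁ ∧ SepXY ν₂ ≤ SepXY ν₁ ∧
        SpanX ν₂ ≤ SpanX ν₁ ∧ SpanY ν₂ ≤ SpanY ν₁ ∧ SpanXY ν₂ ≤ SpanXY ν₁)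
    (hssX : ∀ ν : ℝ, 0 < ν → SpanX ν ≤ SepX ν ∧ SepX ν ≤ SpanX (ν / 2))
    (hssY : ∀ ν : ℝ, 0 < ν → SpanY ν ≤ SepY ν ∧ SepY ν ≤ SpanY (ν / 2))
    (hssXY : ∀ ν : ℝ, 0 < ν → SpanXY ν ≤ SepXY ν ∧ SepXY ν ≤ SpanXY (ν / 2))
    (hlimX : Tendsto (fun ν : ℝ => Real.log (SepX ν) / (-Real.log ν))
      (nhdsWithin 0 (Set.Ioi 0)) (nhds OSDX))
    (hlimY : Tendsto (fun ν : ℝ => Real.log (SepY ν) / (-Real.log ν))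
      (nhdsWithin 0 (Set.Ioi 0)) (nhds OSDY))
    (hprod1 : ∀ ν : ℝ, 0 < ν → SepX ν * SepY ν ≤ SepXY ν)
    (hprod2 : ∀ ν : ℝ, 0 < ν → SpanXY ν ≤ SpanX (ν / 2) * SpanY (ν / 2)) :
    Tendsto (fun ν : ℝ => Real.log (SepXY ν) / (-Real.log ν))
      (nhdsWithin 0 (Set.Ioi 0)) (nhds (OSDX + OSDY)) := by
  have hIoo : Set.Ioo (0:ℝ) 1 ∈ nhdsWithin (0:ℝ) (Set.Ioi 0) :=
    Ioo_mem_nhdsGT_of_mem (by constructor <;> norm_num)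
  -- composition with ν ↦ ν/4
  have hcomp : Tendsto (fun ν : ℝ => ν / 4) (nhdsWithin 0 (Set.Ioi 0))
      (nhdsWithin 0 (Set.Ioi 0)) := by
    apply tendsto_nhdsWithin_of_tendsto_nhds_of_eventually_within
    · have := (tendsto_id.div_const (4:ℝ)).mono_left (nhdsWithin_le_nhds
        (s := Set.Ioi (0:ℝ)) (a := (0:ℝ)))
      simpa using this
    · filter_upwards [self_mem_nhdsWithin] with ν hν
      exact div_pos (Set.mem_Ioi.mp hν) (by norm_num)
  -- -log ν → atTop
  have hneglog : Tendsto (fun ν : ℝ => -Real.log ν) (nhdsWithin 0 (Set.Ioi 0)) atTop :=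
    tendsto_neg_atBot_atTop.comp Real.tendsto_log_nhdsGT_zero
  -- ratio (-log(ν/4))/(-log ν) → 1
  have hratio : Tendsto (fun ν : ℝ => (-Real.log (ν / 4)) / (-Real.log ν))
      (nhdsWithin 0 (Set.Ioi 0)) (nhds 1) := by
    have h0 : Tendsto (fun ν : ℝ => 1 + Real.log 4 / (-Real.log ν))
        (nhdsWithin 0 (Set.Ioi 0)) (nhds (1 + 0)) :=
      tendsto_const_nhds.add (tendsto_const_nhds.div_atTop hneglog)
    rw [show (1:ℝ) = 1 + 0 by ring]
    apply h0.congr'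
    filter_upwards [hIoo] with ν hν
    have hν0 : (0:ℝ) < ν := hν.1
    have hlt : Real.log ν < 0 := Real.log_neg hν0 hν.2
    have hc : -Real.log ν ≠ 0 := (neg_pos.mpr hlt).ne'
    have hc' : Real.log ν ≠ 0 := hlt.ne
    rw [Real.log_div hν0.ne' (by norm_num)]
    field_simp
    ring
  -- lower bound function
  have hlow : Tendsto (fun ν : ℝ =>
      Real.log (SepX ν) / (-Real.log ν) + Real.log (SepY ν) / (-Real.log ν))
      (nhdsWithin 0 (Set.Ioi 0)) (nhds (OSDX + OSDY)) := hlimX.add hlimY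
  -- upper bound function
  have hupp : Tendsto (fun ν : ℝ =>
      (Real.log (SepX (ν / 4)) / (-Real.log (ν / 4)) +
        Real.log (SepY (ν / 4)) / (-Real.log (ν / 4))) *
      ((-Real.log (ν / 4)) / (-Real.log ν)))
      (nhdsWithin 0 (Set.Ioi 0)) (nhds (OSDX + OSDY)) := by
    have h1 : Tendsto (fun ν : ℝ =>
        Real.log (SepX (ν / 4)) / (-Real.log (ν / 4)) +
          Real.log (SepY (ν / 4)) / (-Real.log (ν / 4)))
        (nhdsWithin 0 (Set.Ioi 0)) (nhds (OSDX + OSDY)) :=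
      (hlimX.comp hcomp).add (hlimY.comp hcomp)
    simpa using h1.mul hratio
  apply tendsto_of_tendsto_of_tendsto_of_le_of_le' hlow hupp
  · -- lower inequality
    filter_upwards [hIoo] with ν hν
    have hν0 : (0:ℝ) < ν := hν.1
    have hc : (0:ℝ) < -Real.log ν := neg_pos.mpr (Real.log_neg hν0 hν.2)
    obtain ⟨_, hsx, _, hsy, _, hsxy⟩ := hpos ν hν0
    rw [← add_div]
    have hnum : Real.log (SepX ν) + Real.log (SepY ν) ≤ Real.log (SepXY ν) := by
      rw [← Real.log_mul (by positivity) (by positivity)]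
      exact Real.log_le_log (by positivity) (hprod1 ν hν0)
    gcongr
  · -- upper inequality
    filter_upwards [hIoo] with ν hν
    have hν0 : (0:ℝ) < ν := hν.1
    have hν4 : (0:ℝ) < ν / 4 := by positivity
    have hc : (0:ℝ) < -Real.log ν := neg_pos.mpr (Real.log_neg hν0 hν.2)
    have hd : (0:ℝ) < -Real.log (ν / 4) :=
      neg_pos.mpr (Real.log_neg hν4 (by linarith [hν.2]))
    obtain ⟨hspx, hsx, hspy, hsy, _, hsxy⟩ := hpos (ν / 4) hν4
    have heq : (Real.log (SepX (ν / 4)) / (-Real.log (ν / 4)) +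
        Real.log (SepY (ν / 4)) / (-Real.log (ν / 4))) *
        ((-Real.log (ν / 4)) / (-Real.log ν)) =
        (Real.log (SepX (ν / 4)) + Real.log (SepY (ν / 4))) / (-Real.log ν) := by
      have hc' : Real.log ν ≠ 0 := by linarith
      have hd' : Real.log (ν / 4) ≠ 0 := by linarith
      field_simp
      ring
    rw [heq]
    have hchain : SepXY ν ≤ SepX (ν / 4) * SepY (ν / 4) := by
      have h1 := (hssXY ν hν0).2
      have h2 := hprod2 (ν / 2) (by positivity)
      have h3 := (hssX (ν / 4) hν4).1
      have h4 := (hssY (ν / 4) hν4).1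
      have e : ν / 2 / 2 = ν / 4 := by ring
      rw [e] at h2
      calc SepXY ν ≤ SpanXY (ν / 2) := h1
        _ ≤ SpanX (ν / 4) * SpanY (ν / 4) := h2
        _ ≤ SepX (ν / 4) * SepY (ν / 4) := by
            apply mul_le_mul h3 h4 (by linarith) (by linarith)
    have hnum : Real.log (SepXY ν) ≤
        Real.log (SepX (ν / 4)) + Real.log (SepY (ν / 4)) := by
      rw [← Real.log_mul (by positivity) (by positivity)]
      exact Real.log_le_log (by linarith [(hpos ν hν0).2.2.2.2.2]) hchain
    gcongr
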